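/- The number of type B_n permutation tableaux equals 2^n · n!. -/

import Mathlib

/-- A shape (order ideal) inside the type `B_n` staircase `(n, n-1, …, 1)`:
`μ i` is the length of row `i` (row `0` is the longest possible row, of length `n`;
row `n-1` is the single-box row containing the minimal box). The ideal condition is
`min (μ i) (n - (i+1)) ≤ μ (i+1)`. -/
def IsShapeB (n : ℕ) (μ : ℕ → ℕ) : Prop :=
  (∀ i, i < n → μ i ≤ n - i) ∧ (∀ i, n ≤ i → μ i = 0) ∧
  ∀ i, i + 1 < n → min (μ i) (n - (i + 1)) ≤ μ (i + 1)

/-- The type `(B_n, n)` Le-conditions for a filling `D` (`true` = `+`) of the shape `μ`: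
(1) if a `0` lies above a `+` in the same column, then all boxes to its left in its row
are `0`'s; (2) if a diagonal box (the box in column `n-1-i` of row `i`) contains a `0`,
then all boxes to its left in its row are `0`'s. -/
def LeCondB (n : ℕ) (μ : ℕ → ℕ) (D : ℕ → ℕ → Bool) : Prop :=
  (∀ i j, j < μ i → D i j = false →
    (∃ i', i < i' ∧ j < μ i' ∧ D i' j = true) →
    ∀ j', j' < j → D i j' = false) ∧
  (∀ i, i < n → μ i = n - i → D i (n - i - 1) = false →
    ∀ j', j' < n - i - 1 → D i j' = false)

/-- A type `B_n` permutation tableau: a type `(B_n, n)` Le-diagram with no all-zero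
column. The filling is normalized to be `false` outside the shape. -/
def IsPermTabB (n : ℕ) (μ : ℕ → ℕ) (D : ℕ → ℕ → Bool) : Prop :=
  IsShapeB n μ ∧ (∀ i j, ¬ j < μ i → D i j = false) ∧ LeCondB n μ D ∧
  ∀ j, (∃ i, j < μ i) → ∃ i, j < μ i ∧ D i j = true

open scoped Classical

/-- Row `i` is blocked. -/
def BlockedB (n : ℕ) (μ : ℕ → ℕ) (D : ℕ → ℕ → Bool) (i : ℕ) : Prop :=
  (∃ j, j < μ i ∧ D i j = false ∧ ∃ i', i < i' ∧ j < μ i' ∧ D i' j = true) ∨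
  (μ i = n - i ∧ D i (n - i - 1) = false)

noncomputable def sStat (n : ℕ) (μ : ℕ → ℕ) (D : ℕ → ℕ → Bool) : ℕ :=
  ((Finset.range n).filter fun i => ¬ BlockedB n μ D i).card

def LevelT (n : ℕ) := {x : (ℕ → ℕ) × (ℕ → ℕ → Bool) // IsPermTabB n x.1 x.2}

noncomputable def sT {n : ℕ} (T : LevelT n) : ℕ := sStat n T.1.1 T.1.2

noncomputable def FreeF0 (n : ℕ) (μ : ℕ → ℕ) (D : ℕ → ℕ → Bool) : Finset ℕ :=
  insert n ((Finset.range n).filter fun i => ¬ BlockedB n μ D i)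

noncomputable def FreeF {n : ℕ} (T : LevelT n) : Finset ℕ := FreeF0 n T.1.1 T.1.2

theorem FreeF0_subset_range (n : ℕ) (μ : ℕ → ℕ) (D : ℕ → ℕ → Bool) :
    FreeF0 n μ D ⊆ Finset.range (n+1) := by
  intro i hi
  simp only [FreeF0, Finset.mem_insert, Finset.mem_filter, Finset.mem_range] at hi
  rcases hi with h | ⟨h, -⟩ <;> simp [Finset.mem_range] <;> omega

theorem mem_FreeF0_lt {n : ℕ} {μ : ℕ → ℕ} {D : ℕ → ℕ → Bool} {i : ℕ} (hi : i < n) :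
    i ∈ FreeF0 n μ D ↔ ¬ BlockedB n μ D i := by
  simp only [FreeF0, Finset.mem_insert, Finset.mem_filter, Finset.mem_range]
  constructor
  · rintro (h | ⟨-, h⟩); · omega
    · exact h
  · intro h; exact Or.inr ⟨hi, h⟩

theorem mem_FreeF0_self {n : ℕ} {μ : ℕ → ℕ} {D : ℕ → ℕ → Bool} :
    n ∈ FreeF0 n μ D := by simp [FreeF0]

noncomputable def statF (m : ℕ) (F S : Finset ℕ) : ℕ :=
  (F.filter fun i => i ∈ S ∨ (i ≠ m ∧ ∀ j ∈ F, i < j → j ∉ S)).card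

theorem card_FreeF {n : ℕ} (T : LevelT n) : (FreeF T).card = sT T + 1 := by
  rw [FreeF, FreeF0, Finset.card_insert_of_notMem (by simp)]
  rfl

/-! ### Row deletion / insertion -/

def delRow (x : (ℕ → ℕ) × (ℕ → ℕ → Bool)) : (ℕ → ℕ) × (ℕ → ℕ → Bool) :=
  (fun i => x.1 (i+1), fun i j => x.2 (i+1) j)

def addRow (x : (ℕ → ℕ) × (ℕ → ℕ → Bool)) : (ℕ → ℕ) × (ℕ → ℕ → Bool) :=
  (fun i => match i with | 0 => 0 | (k+1) => x.1 k,
   fun i j => match i with | 0 => false | (k+1) => x.2 k j)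

theorem perm_delRow {n : ℕ} {μ : ℕ → ℕ} {D : ℕ → ℕ → Bool}
    (h : IsPermTabB (n+1) μ D) (h0 : μ 0 = 0) :
    IsPermTabB n (delRow (μ, D)).1 (delRow (μ, D)).2 := by
  obtain ⟨⟨hs1, hs2, hs3⟩, hnorm, ⟨hc1, hc2⟩, hcol⟩ := h
  refine ⟨⟨?_, ?_, ?_⟩, ?_, ⟨?_, ?_⟩, ?_⟩
  · intro i hi
    have := hs1 (i+1) (by omega); simpa [delRow] using by omega
  · intro i hi; exact hs2 (i+1) (by omega)
  · intro i hi
    have := hs3 (i+1) (by omega)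
    simpa [delRow, show n + 1 - (i+1+1) = n - (i+1) from by omega] using this
  · intro i j hj; exact hnorm (i+1) j hj
  · intro i j hj hD ⟨i', hii', hji', hDi'⟩ j' hj'
    exact hc1 (i+1) j hj hD ⟨i'+1, by omega, hji', hDi'⟩ j' hj'
  · intro i hi hμ hD j' hj'
    have := hc2 (i+1) (by omega) (by simpa [delRow, show n+1-(i+1) = n - i from by omega] using hμ)
    exact this (by simpa [delRow, show n+1-(i+1) = n-i from by omega] using hD) j'
      (by simpa [show n+1-(i+1) = n-i from by omega] using hj')
  · intro j ⟨i, hi⟩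
    obtain ⟨i1, hi1, hD1⟩ := hcol j ⟨i+1, hi⟩
    match i1, hi1, hD1 with
    | 0, hi1, _ => exact absurd hi1 (by omega)
    | (k+1), hi1, hD1 => exact ⟨k, hi1, hD1⟩

theorem perm_addRow {n : ℕ} {μ : ℕ → ℕ} {D : ℕ → ℕ → Bool}
    (h : IsPermTabB n μ D) :
    IsPermTabB (n+1) (addRow (μ, D)).1 (addRow (μ, D)).2 := by
  obtain ⟨⟨hs1, hs2, hs3⟩, hnorm, ⟨hc1, hc2⟩, hcol⟩ := h
  refine ⟨⟨?_, ?_, ?_⟩, ?_, ⟨?_, ?_⟩, ?_⟩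
  · intro i hi
    match i with
    | 0 => simp [addRow]
    | (k+1) =>
      show μ k ≤ n + 1 - (k+1)
      rcases Nat.lt_or_ge k n with hk | hk
      · have := hs1 k hk; omega
      · have := hs2 k hk; omega
  · intro i hi
    match i with
    | 0 => rfl
    | (k+1) => exact hs2 k (by omega)
  · intro i hi
    match i with
    | 0 => simp [addRow]
    | (k+1) =>
      have := hs3 k (by omega)
      show min (μ k) (n + 1 - (k+1+1)) ≤ μ (k+1)
      simpa [show n + 1 - (k+2) = n - (k+1) from by omega] using this
  · intro i j hj
    match i with
    | 0 => rfl
    | (k+1) => exact hnorm k j hj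
  · intro i j hj hD hex j' hj'
    match i with
    | 0 => simp [addRow] at hj
    | (k+1) =>
      obtain ⟨i', hii', hji', hDi'⟩ := hex
      match i', hii', hji', hDi' with
      | 0, _, hji', _ => simp [addRow] at hji'
      | (m+1), hii', hji', hDi' =>
        exact hc1 k j hj hD ⟨m, by omega, hji', hDi'⟩ j' hj'
  · intro i hi hμ hD j' hj'
    match i with
    | 0 => have : (0:ℕ) = n + 1 - 0 := hμ; omega
    | (k+1) =>
      have hk : k < n := by omega
      have hμ' : μ k = n - k := by
        have : (addRow (μ, D)).1 (k+1) = μ k := rfl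
        rw [this] at hμ; omega
      exact hc2 k hk hμ' (by simpa [addRow, show n+1-(k+1)-1 = n-k-1 from by omega] using hD) j'
        (by simpa [show n+1-(k+1)-1 = n-k-1 from by omega] using hj')
  · intro j ⟨i, hi⟩
    match i with
    | 0 => simp [addRow] at hi
    | (k+1) =>
      obtain ⟨i1, hi1, hD1⟩ := hcol j ⟨k, hi⟩
      exact ⟨i1+1, hi1, hD1⟩

theorem addRow_delRow {x : (ℕ → ℕ) × (ℕ → ℕ → Bool)} {n : ℕ}
    (h : IsPermTabB (n+1) x.1 x.2) (h0 : x.1 0 = 0) : addRow (delRow x) = x := by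
  obtain ⟨x1, x2⟩ := x
  obtain ⟨_, hnorm, _, _⟩ := h
  have h0' : x1 0 = 0 := h0
  refine Prod.ext ?_ ?_
  · funext i
    match i with
    | 0 => exact h0.symm
    | (k+1) => rfl
  · funext i j
    match i with
    | 0 => exact (hnorm 0 j (by simp [h0'])).symm
    | (k+1) => rfl

theorem delRow_addRow (x : (ℕ → ℕ) × (ℕ → ℕ → Bool)) : delRow (addRow x) = x := rfl

/-- Deleting an empty top row. -/
noncomputable def E1 {n : ℕ} : {T : LevelT (n+1) // T.1.1 0 = 0} ≃ LevelT n where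
  toFun x := ⟨delRow x.1.1, perm_delRow x.1.2 x.2⟩
  invFun y := ⟨⟨addRow y.1, perm_addRow y.2⟩, rfl⟩
  left_inv x := by
    apply Subtype.ext; apply Subtype.ext
    exact addRow_delRow x.1.2 x.2
  right_inv y := by
    apply Subtype.ext
    exact delRow_addRow y.1

theorem sT_E1 {n : ℕ} (x : {T : LevelT (n+1) // T.1.1 0 = 0}) :
    sT x.1 = sT (E1 x) + 1 := by
  obtain ⟨⟨⟨μ, D⟩, hperm⟩, h0⟩ := x
  have h0' : μ 0 = 0 := h0
  show sStat (n+1) μ D = sStat n (delRow (μ, D)).1 (delRow (μ, D)).2 + 1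
  have hb0 : ¬ BlockedB (n+1) μ D 0 := by
    rintro (⟨j, hj, -⟩ | ⟨hμ, -⟩)
    · rw [h0'] at hj; omega
    · rw [h0'] at hμ; omega
  have hshift : ∀ i, BlockedB (n+1) μ D (i+1) ↔
      BlockedB n (delRow (μ, D)).1 (delRow (μ, D)).2 i := by
    intro i
    constructor
    · rintro (⟨j, hj, hD, i', hii', hji', hDi'⟩ | ⟨hμ, hD⟩)
      · match i', hii', hji', hDi' with
        | 0, _, hji', _ => rw [h0'] at hji'; omega
        | (m+1), hii', hji', hDi' =>
          exact Or.inl ⟨j, hj, hD, m, by omega, hji', hDi'⟩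
      · refine Or.inr ⟨?_, ?_⟩
        · show μ (i+1) = n - i; omega
        · show D (i+1) (n - i - 1) = false
          simpa [show n + 1 - (i+1) - 1 = n - i - 1 from by omega] using hD
    · rintro (⟨j, hj, hD, i', hii', hji', hDi'⟩ | ⟨hμ, hD⟩)
      · exact Or.inl ⟨j, hj, hD, i'+1, by omega, hji', hDi'⟩
      · refine Or.inr ⟨?_, ?_⟩
        · show μ (i+1) = n + 1 - (i+1)
          have : μ (i+1) = n - i := hμ
          omega
        · show D (i+1) (n + 1 - (i+1) - 1) = false
          simpa [delRow, show n + 1 - (i+1) - 1 = n - i - 1 from by omega] using hD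
  rw [sStat, sStat, Finset.card_filter, Finset.card_filter, Finset.sum_range_succ']
  simp only [hb0, hshift]
  simp

/-! ### Column deletion / insertion -/

def delCol (x : (ℕ → ℕ) × (ℕ → ℕ → Bool)) : (ℕ → ℕ) × (ℕ → ℕ → Bool) :=
  (fun i => x.1 i - 1, fun i j => x.2 i (j+1))

def Scol (n : ℕ) (x : (ℕ → ℕ) × (ℕ → ℕ → Bool)) : Finset ℕ :=
  (Finset.range (n+1)).filter (fun i => x.2 i 0 = true)

def addCol (n : ℕ) (y : (ℕ → ℕ) × (ℕ → ℕ → Bool)) (S : Finset ℕ) :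
    (ℕ → ℕ) × (ℕ → ℕ → Bool) :=
  (fun i => if i ≤ n then y.1 i + 1 else 0,
   fun i j => match j with | 0 => decide (i ∈ S) | (k+1) => y.2 i k)

theorem rows_pos {n : ℕ} {μ : ℕ → ℕ} {D : ℕ → ℕ → Bool}
    (h : IsPermTabB (n+1) μ D) (h0 : μ 0 ≠ 0) : ∀ i ≤ n, 0 < μ i := by
  obtain ⟨⟨hs1, hs2, hs3⟩, -, -, -⟩ := h
  intro i
  induction i with
  | zero => intro _; omega
  | succ k ih =>
    intro hk
    have h1 : 0 < μ k := ih (by omega)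
    have h2 := hs3 k (by omega)
    omega

theorem perm_delCol {n : ℕ} {μ : ℕ → ℕ} {D : ℕ → ℕ → Bool}
    (h : IsPermTabB (n+1) μ D) (h0 : μ 0 ≠ 0) :
    IsPermTabB n (delCol (μ, D)).1 (delCol (μ, D)).2 := by
  have hpos := rows_pos h h0
  obtain ⟨⟨hs1, hs2, hs3⟩, hnorm, ⟨hc1, hc2⟩, hcol⟩ := h
  refine ⟨⟨?_, ?_, ?_⟩, ?_, ⟨?_, ?_⟩, ?_⟩
  · intro i hi
    have := hs1 i (by omega)
    show μ i - 1 ≤ n - i; omega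
  · intro i hi
    show μ i - 1 = 0
    rcases Nat.lt_or_ge i (n+1) with hlt | hge
    · have := hs1 i hlt; omega
    · have := hs2 i hge; omega
  · intro i hi
    have := hs3 i (by omega)
    have p1 : 0 < μ i := hpos i (by omega)
    have p2 : 0 < μ (i+1) := hpos (i+1) (by omega)
    show min (μ i - 1) (n - (i+1)) ≤ μ (i+1) - 1
    omega
  · intro i j hj
    simp only [delCol] at hj ⊢
    exact hnorm i (j+1) (by omega)
  · rintro i j hj hD ⟨i', hii', hji', hDi'⟩ j' hj'
    simp only [delCol] at hj hD hji' hDi' ⊢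
    have : ∀ j'' < j + 1, D i j'' = false :=
      hc1 i (j+1) (by omega) hD ⟨i', hii', by omega, hDi'⟩
    exact this (j'+1) (by omega)
  · intro i hi hμ hD j' hj'
    simp only [delCol] at hμ hD ⊢
    have hμ' : μ i = n + 1 - i := by
      have := hpos i (by omega); omega
    have : ∀ j'' < n + 1 - i - 1, D i j'' = false := by
      refine hc2 i (by omega) hμ' ?_
      simpa [show n - i - 1 + 1 = n + 1 - i - 1 from by omega] using hD
    exact this (j'+1) (by omega)
  · rintro j ⟨i, hi⟩
    simp only [delCol] at hi ⊢
    obtain ⟨i1, hi1, hD1⟩ := hcol (j+1) ⟨i, by omega⟩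
    exact ⟨i1, by omega, hD1⟩

/-- A row blocked in the column-deleted tableau has a `0` in column 0. -/
theorem blocked_forces_zero {n : ℕ} {μ : ℕ → ℕ} {D : ℕ → ℕ → Bool}
    (h : IsPermTabB (n+1) μ D) (h0 : μ 0 ≠ 0) {i : ℕ} (hi : i < n)
    (hb : BlockedB n (delCol (μ, D)).1 (delCol (μ, D)).2 i) : D i 0 = false := by
  have hpos := rows_pos h h0
  obtain ⟨⟨hs1, hs2, hs3⟩, hnorm, ⟨hc1, hc2⟩, hcol⟩ := h
  rcases hb with ⟨j, hj, hD, i', hii', hji', hDi'⟩ | ⟨hμ, hD⟩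
  · simp only [delCol] at hj hD hji' hDi'
    have hj' : j + 1 < μ i := by omega
    exact hc1 i (j+1) hj' hD ⟨i', hii', by omega, hDi'⟩ 0 (by omega)
  · simp only [delCol] at hμ hD
    have hμ' : μ i = n + 1 - i := by
      have := hpos i (by omega); omega
    refine hc2 i (by omega) hμ' ?_ 0 (by omega)
    have : (delCol (μ, D)).2 i (n - i - 1) = false := hD
    simpa [delCol, show n - i - 1 + 1 = n + 1 - i - 1 from by omega] using this

theorem blocked_lift {n : ℕ} {μ : ℕ → ℕ} {D : ℕ → ℕ → Bool}
    (h : IsPermTabB (n+1) μ D) (h0 : μ 0 ≠ 0) {i : ℕ} (hi : i < n)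
    (hb : BlockedB n (delCol (μ, D)).1 (delCol (μ, D)).2 i) : BlockedB (n+1) μ D i := by
  have hpos := rows_pos h h0
  rcases hb with ⟨j, hj, hD, i', hii', hji', hDi'⟩ | ⟨hμ, hD⟩
  · simp only [delCol] at hj hD hji' hDi'
    exact Or.inl ⟨j+1, by omega, hD, i', hii', by omega, hDi'⟩
  · simp only [delCol] at hμ hD
    refine Or.inr ⟨?_, ?_⟩
    · show μ i = n + 1 - i
      have := hpos i (by omega); omega
    · show D i (n + 1 - i - 1) = false
      have : (delCol (μ, D)).2 i (n - i - 1) = false := hD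
      simpa [delCol, show n - i - 1 + 1 = n + 1 - i - 1 from by omega] using this

theorem Scol_spec {n : ℕ} {μ : ℕ → ℕ} {D : ℕ → ℕ → Bool} {i : ℕ} :
    i ∈ Scol n (μ, D) ↔ i ≤ n ∧ D i 0 = true := by
  simp only [Scol, Finset.mem_filter, Finset.mem_range]
  constructor
  · rintro ⟨h1, h2⟩; exact ⟨by omega, h2⟩
  · rintro ⟨h1, h2⟩; exact ⟨by omega, h2⟩

theorem Scol_subset {n : ℕ} {μ : ℕ → ℕ} {D : ℕ → ℕ → Bool}
    (h : IsPermTabB (n+1) μ D) (h0 : μ 0 ≠ 0) :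
    Scol n (μ, D) ⊆ FreeF0 n (delCol (μ, D)).1 (delCol (μ, D)).2 := by
  intro i hi
  rw [Scol_spec] at hi
  obtain ⟨hin, hD⟩ := hi
  rcases Nat.lt_or_ge i n with hlt | hge
  · rw [mem_FreeF0_lt hlt]
    intro hb
    have := blocked_forces_zero h h0 hlt hb
    rw [this] at hD; exact Bool.false_ne_true hD
  · have : i = n := by omega
    subst this; exact mem_FreeF0_self

theorem Scol_nonempty {n : ℕ} {μ : ℕ → ℕ} {D : ℕ → ℕ → Bool}
    (h : IsPermTabB (n+1) μ D) (h0 : μ 0 ≠ 0) : (Scol n (μ, D)).Nonempty := by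
  obtain ⟨⟨hs1, hs2, hs3⟩, hnorm, hle, hcol⟩ := h
  obtain ⟨i1, hi1, hD1⟩ := hcol 0 ⟨0, by omega⟩
  refine ⟨i1, Scol_spec.2 ⟨?_, hD1⟩⟩
  by_contra hgt
  have := hs2 i1 (by omega)
  omega

theorem perm_addCol {n : ℕ} {μ' : ℕ → ℕ} {D' : ℕ → ℕ → Bool}
    (h' : IsPermTabB n μ' D') {S : Finset ℕ} (hS : S ⊆ FreeF0 n μ' D')
    (hne : S.Nonempty) :
    IsPermTabB (n+1) (addCol n (μ', D') S).1 (addCol n (μ', D') S).2 := by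
  obtain ⟨⟨hs1, hs2, hs3⟩, hnorm, ⟨hc1, hc2⟩, hcol⟩ := h'
  have hSr : ∀ i ∈ S, i ≤ n := by
    intro i hi
    have := FreeF0_subset_range n μ' D' (hS hi)
    simp only [Finset.mem_range] at this; omega
  -- a blocked row (of the smaller tableau) is not in S
  have hSnb : ∀ i < n, BlockedB n μ' D' i → i ∉ S := by
    intro i hi hb hiS
    exact (mem_FreeF0_lt hi).1 (hS hiS) hb
  refine ⟨⟨?_, ?_, ?_⟩, ?_, ⟨?_, ?_⟩, ?_⟩
  · intro i hi
    show (if i ≤ n then μ' i + 1 else 0) ≤ n + 1 - i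
    rw [if_pos (show i ≤ n by omega)]
    rcases Nat.lt_or_ge i n with hlt | hge
    · have := hs1 i hlt; omega
    · have := hs2 i (by omega); omega
  · intro i hi
    show (if i ≤ n then μ' i + 1 else 0) = 0
    rw [if_neg (show ¬ i ≤ n by omega)]
  · intro i hi
    show min (if i ≤ n then μ' i + 1 else 0) (n + 1 - (i+1)) ≤
      (if i + 1 ≤ n then μ' (i+1) + 1 else 0)
    rw [if_pos (show i ≤ n by omega), if_pos (show i + 1 ≤ n by omega)]
    rcases Nat.lt_or_ge (i+1) n with hlt | hge
    · have := hs3 i hlt; omega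
    · have := hs2 (i+1) (by omega); omega
  · intro i j hj
    match j with
    | 0 =>
      show decide (i ∈ S) = false
      have hμ : ¬ (0 : ℕ) < (if i ≤ n then μ' i + 1 else 0) := hj
      have hin : ¬ i ≤ n := by
        by_contra hc; rw [if_pos hc] at hμ; omega
      simp only [decide_eq_false_iff_not]
      intro hiS; exact hin (hSr i hiS)
    | (k+1) =>
      show D' i k = false
      refine hnorm i k ?_
      intro hk
      rcases Nat.lt_or_ge n i with hgt | hle
      · have := hs2 i (by omega); omega
      · have hμ : ¬ (k+1 : ℕ) < (if i ≤ n then μ' i + 1 else 0) := hj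
        rw [if_pos hle] at hμ; omega
  · intro i j hj hD hex j' hj'
    match j, hj, hD, hj' with
    | 0, _, _, hj' => omega
    | (k+1), hj, hD, hj' =>
      have hin : i ≤ n := by
        by_contra hc
        have : (k+1 : ℕ) < (if i ≤ n then μ' i + 1 else 0) := hj
        rw [if_neg hc] at this; omega
      have hk : k < μ' i := by
        have : (k+1 : ℕ) < (if i ≤ n then μ' i + 1 else 0) := hj
        rw [if_pos hin] at this; omega
      have hD'' : D' i k = false := hD
      obtain ⟨i', hii', hji', hDi'⟩ := hex
      have hi'n : i' ≤ n := by
        by_contra hc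
        have : (k+1 : ℕ) < (if i' ≤ n then μ' i' + 1 else 0) := hji'
        rw [if_neg hc] at this; omega
      have hki' : k < μ' i' := by
        have : (k+1 : ℕ) < (if i' ≤ n then μ' i' + 1 else 0) := hji'
        rw [if_pos hi'n] at this; omega
      have hDi'' : D' i' k = true := hDi'
      have hblock : BlockedB n μ' D' i :=
        Or.inl ⟨k, hk, hD'', i', hii', hki', hDi''⟩
      have hiS : i ∉ S := hSnb i (by omega) hblock
      match j' with
      | 0 => show decide (i ∈ S) = false; simpa using hiS
      | (m+1) =>
        show D' i m = false
        exact hc1 i k hk hD'' ⟨i', hii', hki', hDi''⟩ m (by omega)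
  · intro i hi hμ hD j' hj'
    rcases Nat.eq_or_lt_of_le (show i ≤ n by omega) with heq | hlt
    · subst heq; omega
    · have hμ' : μ' i = n - i := by
        have : (if i ≤ n then μ' i + 1 else 0) = n + 1 - i := hμ
        rw [if_pos (show i ≤ n by omega)] at this; omega
      have he : n + 1 - i - 1 = (n - i - 1) + 1 := by omega
      rw [he] at hD
      have hD'' : D' i (n - i - 1) = false := hD
      have hblock : BlockedB n μ' D' i := Or.inr ⟨hμ', hD''⟩
      have hiS : i ∉ S := hSnb i hlt hblock
      have hcc := hc2 i hlt hμ' hD''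
      match j' with
      | 0 => show decide (i ∈ S) = false; simpa using hiS
      | (m+1) =>
        show D' i m = false
        exact hcc m (by omega)
  · intro j hex
    match j with
    | 0 =>
      obtain ⟨i0, hi0⟩ := hne
      refine ⟨i0, ?_, by show decide (i0 ∈ S) = true; simpa using hi0⟩
      show (0:ℕ) < (if i0 ≤ n then μ' i0 + 1 else 0)
      rw [if_pos (hSr i0 hi0)]; omega
    | (k+1) =>
      obtain ⟨i, hi⟩ := hex
      have hin : i ≤ n := by
        by_contra hc
        have : (k+1:ℕ) < (if i ≤ n then μ' i + 1 else 0) := hi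
        rw [if_neg hc] at this; omega
      have hk : k < μ' i := by
        have : (k+1:ℕ) < (if i ≤ n then μ' i + 1 else 0) := hi
        rw [if_pos hin] at this; omega
      obtain ⟨i1, hi1, hD1⟩ := hcol k ⟨i, hk⟩
      have hi1n : i1 ≤ n := by
        by_contra hc
        have := hs2 i1 (by omega); omega
      refine ⟨i1, ?_, hD1⟩
      show (k+1:ℕ) < (if i1 ≤ n then μ' i1 + 1 else 0)
      rw [if_pos hi1n]; omega

theorem addCol_delCol {n : ℕ} {μ : ℕ → ℕ} {D : ℕ → ℕ → Bool}
    (h : IsPermTabB (n+1) μ D) (h0 : μ 0 ≠ 0) :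
    addCol n (delCol (μ, D)) (Scol n (μ, D)) = (μ, D) := by
  have hpos := rows_pos h h0
  obtain ⟨⟨hs1, hs2, hs3⟩, hnorm, -, -⟩ := h
  refine Prod.ext ?_ ?_
  · funext i
    show (if i ≤ n then μ i - 1 + 1 else 0) = μ i
    rcases Nat.lt_or_ge n i with hgt | hle
    · rw [if_neg (by omega)]
      exact (hs2 i (by omega)).symm
    · rw [if_pos (by omega)]
      have := hpos i (by omega); omega
  · funext i j
    match j with
    | 0 =>
      show decide (i ∈ Scol n (μ, D)) = D i 0
      rcases Nat.lt_or_ge n i with hgt | hle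
      · have hD0 : D i 0 = false := by
          refine hnorm i 0 ?_
          have := hs2 i (by omega); omega
        rw [hD0]
        simp only [decide_eq_false_iff_not, Scol_spec]
        rintro ⟨h1, -⟩; omega
      · cases hD : D i 0 with
        | true => simp only [decide_eq_true_eq, Scol_spec]; exact ⟨by omega, hD⟩
        | false =>
          simp only [decide_eq_false_iff_not, Scol_spec]
          rintro ⟨-, h2⟩; rw [hD] at h2; exact Bool.false_ne_true h2
    | (k+1) => rfl

theorem delCol_addCol {n : ℕ} (y : (ℕ → ℕ) × (ℕ → ℕ → Bool)) (S : Finset ℕ)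
    (h2 : ∀ i, n ≤ i → y.1 i = 0) :
    delCol (addCol n y S) = y := by
  refine Prod.ext ?_ ?_
  · funext i
    show (if i ≤ n then y.1 i + 1 else 0) - 1 = y.1 i
    rcases Nat.lt_or_ge n i with hgt | hle
    · rw [if_neg (by omega)]; exact (h2 i (by omega)).symm
    · rw [if_pos (by omega)]; omega
  · funext i j; rfl

theorem Scol_addCol {n : ℕ} (y : (ℕ → ℕ) × (ℕ → ℕ → Bool)) (S : Finset ℕ)
    (hS : S ⊆ Finset.range (n+1)) :
    Scol n (addCol n y S) = S := by
  ext i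
  rw [Scol_spec]
  show (i ≤ n ∧ decide (i ∈ S) = true) ↔ i ∈ S
  constructor
  · rintro ⟨-, h⟩; simpa using h
  · intro h
    refine ⟨?_, by simpa using h⟩
    have := hS h; simp only [Finset.mem_range] at this; omega

theorem sigma_eq_helper {n : ℕ}
    (a b : Σ T' : LevelT n, {S : Finset ℕ // S ⊆ FreeF T' ∧ S.Nonempty})
    (h1 : a.1.1 = b.1.1) (h2 : a.2.1 = b.2.1) : a = b := by
  obtain ⟨⟨a1, ha⟩, ⟨a2, ha2⟩⟩ := a
  obtain ⟨⟨b1, hb⟩, ⟨b2, hb2⟩⟩ := b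
  dsimp at h1 h2
  subst h1; subst h2
  rfl

/-- Deleting column `0`. -/
noncomputable def E2 {n : ℕ} : {T : LevelT (n+1) // T.1.1 0 ≠ 0} ≃
    Σ T' : LevelT n, {S : Finset ℕ // S ⊆ FreeF T' ∧ S.Nonempty} where
  toFun x := ⟨⟨delCol x.1.1, perm_delCol x.1.2 x.2⟩,
    ⟨Scol n x.1.1, by
      obtain ⟨⟨⟨μ, D⟩, h⟩, h0⟩ := x
      exact Scol_subset h h0, by
      obtain ⟨⟨⟨μ, D⟩, h⟩, h0⟩ := x
      exact Scol_nonempty h h0⟩⟩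
  invFun y := ⟨⟨addCol n y.1.1 y.2.1, by
      obtain ⟨⟨⟨μ', D'⟩, h'⟩, ⟨S, hS, hne⟩⟩ := y
      exact perm_addCol h' hS hne⟩, by
      show ¬ (if (0:ℕ) ≤ n then _ + 1 else 0) = 0
      rw [if_pos (Nat.zero_le n)]; omega⟩
  left_inv x := by
    obtain ⟨⟨⟨μ, D⟩, h⟩, h0⟩ := x
    apply Subtype.ext; apply Subtype.ext
    exact addCol_delCol h h0
  right_inv y := by
    obtain ⟨⟨⟨μ', D'⟩, h'⟩, ⟨S, hS, hne⟩⟩ := y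
    have hd : delCol (addCol n (μ', D') S) = (μ', D') :=
      delCol_addCol (μ', D') S h'.1.2.1
    have hsc : Scol n (addCol n (μ', D') S) = S :=
      Scol_addCol (μ', D') S (fun i hi => FreeF0_subset_range n μ' D' (hS hi))
    exact sigma_eq_helper _ _ hd hsc

theorem blocked_last {n : ℕ} {μ : ℕ → ℕ} {D : ℕ → ℕ → Bool}
    (h : IsPermTabB (n+1) μ D) (h0 : μ 0 ≠ 0) :
    BlockedB (n+1) μ D n ↔ D n 0 = false := by
  have hpos := rows_pos h h0
  obtain ⟨⟨hs1, hs2, hs3⟩, -, -, -⟩ := h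
  have hμn : μ n = 1 := by
    have := hs1 n (by omega); have := hpos n (by omega); omega
  constructor
  · rintro (⟨j, hj, hD, i', hii', hji', -⟩ | ⟨-, hD⟩)
    · exfalso
      have : i' < n + 1 := by
        by_contra hc
        have := hs2 i' (by omega); omega
      omega
    · simpa [show n + 1 - n - 1 = 0 from by omega] using hD
  · intro hD
    refine Or.inr ⟨by omega, ?_⟩
    simpa [show n + 1 - n - 1 = 0 from by omega] using hD

theorem blocked_mid {n : ℕ} {μ : ℕ → ℕ} {D : ℕ → ℕ → Bool}
    (h : IsPermTabB (n+1) μ D) (h0 : μ 0 ≠ 0) {i : ℕ} (hi : i < n) :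
    BlockedB (n+1) μ D i ↔
      BlockedB n (delCol (μ, D)).1 (delCol (μ, D)).2 i ∨
      (D i 0 = false ∧ ∃ i', i < i' ∧ i' ≤ n ∧ D i' 0 = true) := by
  have hpos := rows_pos h h0
  have hbl := blocked_lift h h0 hi
  obtain ⟨⟨hs1, hs2, hs3⟩, hnorm, ⟨hc1, hc2⟩, hcol⟩ := h
  constructor
  · rintro (⟨j, hj, hD, i', hii', hji', hDi'⟩ | ⟨hμ, hD⟩)
    · have hi'n : i' ≤ n := by
        by_contra hc
        have := hs2 i' (by omega); omega
      match j with
      | 0 => exact Or.inr ⟨hD, i', hii', hi'n, hDi'⟩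
      | (k+1) =>
        refine Or.inl (Or.inl ⟨k, ?_, hD, i', hii', ?_, hDi'⟩)
        · show k < μ i - 1; omega
        · show k < μ i' - 1; omega
    · refine Or.inl (Or.inr ⟨?_, ?_⟩)
      · show μ i - 1 = n - i; omega
      · show D i (n - i - 1 + 1) = false
        simpa [show n - i - 1 + 1 = n + 1 - i - 1 from by omega] using hD
  · rintro (hb | ⟨hD0, i', hii', hi'n, hDi'⟩)
    · exact hbl hb
    · exact Or.inl ⟨0, hpos i (by omega), hD0, i', hii', hpos i' hi'n, hDi'⟩

theorem sT_E2 {n : ℕ} (x : {T : LevelT (n+1) // T.1.1 0 ≠ 0}) :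
    sT x.1 = statF n (FreeF (E2 x).1) (E2 x).2.1 := by
  obtain ⟨⟨⟨μ, D⟩, h⟩, h0⟩ := x
  have h0' : μ 0 ≠ 0 := h0
  show sStat (n+1) μ D =
    statF n (FreeF0 n (delCol (μ, D)).1 (delCol (μ, D)).2) (Scol n (μ, D))
  set F := FreeF0 n (delCol (μ, D)).1 (delCol (μ, D)).2 with hF
  set S := Scol n (μ, D) with hSdef
  have hCin : ∀ j ≤ n, D j 0 = true → j ∈ F := by
    intro j hj hD
    exact Scol_subset h h0' (Scol_spec.2 ⟨hj, hD⟩)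
  have hDle : ∀ i ∈ F, i ≤ n := by
    intro i hi
    have := FreeF0_subset_range n _ _ hi
    simp only [Finset.mem_range] at this; omega
  rw [sStat, statF]
  congr 1
  ext i
  simp only [Finset.mem_filter, Finset.mem_range]
  constructor
  · rintro ⟨hi1, hnb⟩
    rcases Nat.lt_or_ge i n with hlt | hge
    · have hmid := (blocked_mid h h0' hlt).not.1 hnb
      push_neg at hmid
      obtain ⟨hnb', hcol0⟩ := hmid
      refine ⟨(mem_FreeF0_lt hlt).2 hnb', ?_⟩
      cases hD : D i 0 with
      | true => exact Or.inl (Scol_spec.2 ⟨by omega, hD⟩)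
      | false =>
        refine Or.inr ⟨by omega, ?_⟩
        intro j hjF hij hjS
        obtain ⟨hjn, hjD⟩ := Scol_spec.1 hjS
        exact absurd (hcol0 hD j hij hjn) (by simp [hjD])
    · have hin : i = n := by omega
      subst hin
      have hD : D i 0 = true := by
        rcases Bool.eq_false_or_eq_true (D i 0) with ht | hf
        · exact ht
        · exact absurd ((blocked_last h h0').2 hf) hnb
      exact ⟨mem_FreeF0_self, Or.inl (Scol_spec.2 ⟨le_refl i, hD⟩)⟩
  · rintro ⟨hiF, hbr⟩
    have hin : i ≤ n := hDle i hiF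
    refine ⟨by omega, ?_⟩
    rcases Nat.lt_or_ge i n with hlt | hge
    · rw [blocked_mid h h0' hlt]
      rintro (hb | ⟨hD0, i', hii', hi'n, hDi'⟩)
      · exact (mem_FreeF0_lt hlt).1 hiF hb
      · rcases hbr with hiS | ⟨-, hall⟩
        · obtain ⟨-, hDi⟩ := Scol_spec.1 hiS
          simp [hDi] at hD0
        · exact hall i' (hCin i' hi'n hDi') hii' (Scol_spec.2 ⟨hi'n, hDi'⟩)
    · have : i = n := by omega
      subst this
      rw [blocked_last h h0']
      intro hD0
      rcases hbr with hiS | ⟨hne, -⟩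
      · obtain ⟨-, hDi⟩ := Scol_spec.1 hiS
        simp [hDi] at hD0
      · exact hne rfl

theorem statF_empty {m : ℕ} {F : Finset ℕ} (hm : m ∈ F) : statF m F ∅ = F.card - 1 := by
  rw [statF]
  have he : (F.filter fun i => i ∈ (∅ : Finset ℕ) ∨
      (i ≠ m ∧ ∀ j ∈ F, i < j → j ∉ (∅ : Finset ℕ))) = F.filter (fun i => i ≠ m) :=
    Finset.filter_congr (by intro i _; simp)
  rw [he, Finset.filter_ne', Finset.card_erase_of_mem hm]

theorem count_key' (t : ℕ) (m : ℕ) (F : Finset ℕ) (hm : m ∈ F) (hmax : ∀ i ∈ F, i ≤ m) :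
    (∑ S ∈ F.powerset, t ^ statF m F S) + t ^ F.card =
      2 * t * (t + 1) ^ (F.card - 1) + t ^ (F.card - 1) := by
  induction F using Finset.induction_on_min with
  | empty => simp at hm
  | insert a F' ha IH =>
    have haF' : a ∉ F' := fun h => lt_irrefl a (ha a h)
    rcases F'.eq_empty_or_nonempty with rfl | hne
    · -- singleton case
      have hma : m = a := by simpa using hm
      subst hma
      show (∑ S ∈ ({m} : Finset ℕ).powerset, t ^ statF m {m} S) + t ^ ({m} : Finset ℕ).card
        = 2 * t * (t + 1) ^ (({m} : Finset ℕ).card - 1) + t ^ (({m} : Finset ℕ).card - 1)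
      have hps : ({m} : Finset ℕ).powerset = {∅, {m}} := by
        show (insert m (∅ : Finset ℕ)).powerset = {∅, {m}}
        rw [Finset.powerset_insert, Finset.powerset_empty, Finset.image_singleton]
        ext S
        simp [or_comm]
      rw [hps, Finset.sum_pair (Finset.singleton_ne_empty m).symm]
      have h1 : statF m {m} ∅ = 0 := by
        rw [statF_empty (Finset.mem_singleton_self m)]; simp
      have h2 : statF m {m} {m} = 1 := by
        rw [statF]
        rw [Finset.filter_true_of_mem (fun i hi => by
          simp only [Finset.mem_singleton] at hi
          exact Or.inl (by simp [hi]))]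
        simp
      rw [h1, h2]
      simp [Finset.card_singleton]
      ring
    · -- m is in F'
      have hmF' : m ∈ F' := by
        rcases Finset.mem_insert.1 hm with rfl | h
        · obtain ⟨b, hb⟩ := hne
          exact absurd (hmax b (Finset.mem_insert_of_mem hb)) (not_le.2 (ha b hb))
        · exact h
      have hmax' : ∀ i ∈ F', i ≤ m := fun i hi => hmax i (Finset.mem_insert_of_mem hi)
      have ham : a ≠ m := fun h => haF' (h ▸ hmF')
      -- key stat lemmas
      have keyfilter : ∀ S, S ⊆ F' →
          (F'.filter fun i => i ∈ S ∨ (i ≠ m ∧ ∀ j ∈ insert a F', i < j → j ∉ S))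
          = F'.filter fun i => i ∈ S ∨ (i ≠ m ∧ ∀ j ∈ F', i < j → j ∉ S) := by
        intro S hS
        apply Finset.filter_congr
        intro i hi
        constructor
        · rintro (h | ⟨h1, h2⟩)
          · exact Or.inl h
          · exact Or.inr ⟨h1, fun j hj hij => h2 j (Finset.mem_insert_of_mem hj) hij⟩
        · rintro (h | ⟨h1, h2⟩)
          · exact Or.inl h
          · refine Or.inr ⟨h1, fun j hj hij => ?_⟩
            rcases Finset.mem_insert.1 hj with rfl | hj'
            · exact absurd (lt_trans (ha i hi) hij) (lt_irrefl _)
            · exact h2 j hj' hij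
      have k1 : ∀ S ∈ F'.powerset,
          statF m (insert a F') (insert a S) = statF m F' S + 1 := by
        intro S hS
        rw [Finset.mem_powerset] at hS
        rw [statF, statF, Finset.filter_insert, if_pos (Or.inl (Finset.mem_insert_self a S))]
        have hfc : (F'.filter fun i => i ∈ insert a S ∨
            (i ≠ m ∧ ∀ j ∈ insert a F', i < j → j ∉ insert a S))
            = F'.filter fun i => i ∈ S ∨ (i ≠ m ∧ ∀ j ∈ F', i < j → j ∉ S) := by
          rw [show (F'.filter fun i => i ∈ insert a S ∨
              (i ≠ m ∧ ∀ j ∈ insert a F', i < j → j ∉ insert a S))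
              = F'.filter fun i => i ∈ S ∨ (i ≠ m ∧ ∀ j ∈ F', i < j → j ∉ S) from ?_]
          apply Finset.filter_congr
          intro i hi
          have hia : a ≠ i := ne_of_lt (ha i hi)
          constructor
          · rintro (h | ⟨h1, h2⟩)
            · exact Or.inl ((Finset.mem_insert.1 h).resolve_left (fun h' => hia h'.symm))
            · refine Or.inr ⟨h1, fun j hj hij => ?_⟩
              have := h2 j (Finset.mem_insert_of_mem hj) hij
              intro hjS; exact this (Finset.mem_insert_of_mem hjS)
          · rintro (h | ⟨h1, h2⟩)
            · exact Or.inl (Finset.mem_insert_of_mem h)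
            · refine Or.inr ⟨h1, fun j hj hij => ?_⟩
              rcases Finset.mem_insert.1 hj with rfl | hj'
              · exact absurd (lt_trans (ha i hi) hij) (lt_irrefl _)
              · intro hjS
                rcases Finset.mem_insert.1 hjS with rfl | hjS'
                · exact absurd (ha j hj') (lt_irrefl _)
                · exact h2 j hj' hij hjS'
        rw [hfc]
        rw [Finset.card_insert_of_notMem (fun hc => haF' (Finset.mem_of_mem_filter a hc))]
      have k2 : ∀ S ∈ F'.powerset, S.Nonempty →
          statF m (insert a F') S = statF m F' S := by
        intro S hS hSne
        rw [Finset.mem_powerset] at hS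
        obtain ⟨b, hb⟩ := hSne
        rw [statF, statF, Finset.filter_insert, if_neg, keyfilter S hS]
        rintro (h | ⟨-, h2⟩)
        · exact haF' (hS h)
        · exact h2 b (Finset.mem_insert_of_mem (hS hb)) (ha b (hS hb)) hb
      -- sum decomposition
      have hdisj : Disjoint F'.powerset (F'.powerset.image (insert a)) := by
        rw [Finset.disjoint_left]
        intro T hT hT'
        obtain ⟨S, hS, rfl⟩ := Finset.mem_image.1 hT'
        exact haF' (Finset.mem_powerset.1 hT (Finset.mem_insert_self a S))
      have hinj : ∀ S1 ∈ F'.powerset, ∀ S2 ∈ F'.powerset,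
          insert a S1 = insert a S2 → S1 = S2 := by
        intro S1 h1 S2 h2 he
        rw [Finset.mem_powerset] at h1 h2
        have e1 : (insert a S1).erase a = S1 :=
          Finset.erase_insert (fun hc => haF' (h1 hc))
        have e2 : (insert a S2).erase a = S2 :=
          Finset.erase_insert (fun hc => haF' (h2 hc))
        rw [← e1, ← e2, he]
      rw [Finset.powerset_insert, Finset.sum_union hdisj, Finset.sum_image hinj]
      -- split off the empty set from both plain sums
      have hsplit : ∀ f : Finset ℕ → ℕ, ∑ S ∈ F'.powerset, f S =
          f ∅ + ∑ S ∈ F'.powerset.erase ∅, f S := by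
        intro f
        rw [Finset.add_sum_erase _ f (Finset.empty_mem_powerset F')]
      set c := F'.card with hc
      have hc1 : 1 ≤ c := Finset.card_pos.2 hne
      have hcard : (insert a F').card = c + 1 := Finset.card_insert_of_notMem haF'
      -- rewrite sums
      have e1 : ∑ S ∈ F'.powerset, t ^ statF m (insert a F') S =
          t ^ c + ∑ S ∈ F'.powerset.erase ∅, t ^ statF m F' S := by
        rw [hsplit (fun S => t ^ statF m (insert a F') S)]
        congr 1
        · rw [statF_empty (Finset.mem_insert_of_mem hmF'), hcard, Nat.add_sub_cancel]
        · apply Finset.sum_congr rfl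
          intro S hS
          rw [k2 S (Finset.mem_of_mem_erase hS)
            (Finset.nonempty_iff_ne_empty.2 (Finset.ne_of_mem_erase hS))]
      have e2 : ∑ S ∈ F'.powerset, t ^ statF m (insert a F') (insert a S) =
          t * ∑ S ∈ F'.powerset, t ^ statF m F' S := by
        rw [Finset.mul_sum]
        apply Finset.sum_congr rfl
        intro S hS
        rw [k1 S hS, pow_succ, mul_comm]
      have e3 : ∑ S ∈ F'.powerset, t ^ statF m F' S =
          t ^ (c - 1) + ∑ S ∈ F'.powerset.erase ∅, t ^ statF m F' S := by
        rw [hsplit (fun S => t ^ statF m F' S), statF_empty hmF']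
      have hIH := IH hmF' hmax'
      rw [e1, e2, e3, hcard]
      -- pure arithmetic
      set Q := ∑ S ∈ F'.powerset.erase ∅, t ^ statF m F' S with hQ
      have harith : (t ^ c + Q + t * (t ^ (c - 1) + Q)) + t ^ (c + 1) =
          2 * t * (t + 1) ^ (c + 1 - 1) + t ^ (c + 1 - 1) := by
        have hpow1 : t ^ c = t * t ^ (c - 1) := by
          conv_lhs => rw [show c = (c - 1) + 1 from by omega]
          rw [pow_succ, mul_comm]
        have hpow2 : t ^ (c + 1) = t * t * t ^ (c - 1) := by
          rw [pow_succ, hpow1]; ring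
        have hpow3 : (t + 1) ^ c = (t + 1) * (t + 1) ^ (c - 1) := by
          conv_lhs => rw [show c = (c - 1) + 1 from by omega]
          rw [pow_succ, mul_comm]
        have hIH' : (t ^ (c - 1) + Q) + t * t ^ (c - 1) =
            2 * t * (t + 1) ^ (c - 1) + t ^ (c - 1) := by
          rw [← hpow1, ← e3]; exact hIH
        simp only [Nat.add_sub_cancel]
        rw [hpow1, hpow2, hpow3]
        zify at hIH' ⊢
        linear_combination (t + 1) * hIH'
      convert harith using 2

theorem perm_zero : IsPermTabB 0 (fun _ => 0) (fun _ _ => false) :=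
  ⟨⟨fun i hi => absurd hi (Nat.not_lt_zero i), fun _ _ => rfl,
    fun i hi => absurd hi (Nat.not_lt_zero _)⟩,
   fun _ _ _ => rfl,
   ⟨fun i j hj _ _ _ _ => rfl, fun i hi => absurd hi (Nat.not_lt_zero _)⟩,
   fun j hex => absurd hex (by rintro ⟨i, hi⟩; exact absurd hi (Nat.not_lt_zero j))⟩

theorem levelT_zero_eq (x : LevelT 0) :
    x = ⟨(fun _ => 0, fun _ _ => false), perm_zero⟩ := by
  obtain ⟨⟨μ, D⟩, h⟩ := x
  have hμ : ∀ i, μ i = 0 := fun i => h.1.2.1 i (Nat.zero_le i)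
  apply Subtype.ext
  refine Prod.ext (funext hμ) (funext fun i => funext fun j => ?_)
  exact h.2.1 i j (show ¬ j < μ i from by rw [hμ i]; omega)

instance : Subsingleton (LevelT 0) := by
  constructor
  rintro ⟨⟨μ1, D1⟩, h1⟩ ⟨⟨μ2, D2⟩, h2⟩
  have e1 : ∀ (μ : ℕ → ℕ) (D : ℕ → ℕ → Bool), IsPermTabB 0 μ D →
      μ = (fun _ => 0) ∧ D = (fun _ _ => false) := by
    intro μ D h
    have hμ : ∀ i, μ i = 0 := fun i => h.1.2.1 i (Nat.zero_le i)
    refine ⟨funext hμ, funext fun i => funext fun j => ?_⟩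
    exact h.2.1 i j (by rw [hμ]; omega)
  obtain ⟨e11, e12⟩ := e1 μ1 D1 h1
  obtain ⟨e21, e22⟩ := e1 μ2 D2 h2
  apply Subtype.ext
  simp only [e11, e12, e21, e22]

noncomputable def EquivSucc {n : ℕ} : LevelT (n+1) ≃
    (LevelT n ⊕ Σ T' : LevelT n, {S : Finset ℕ // S ⊆ FreeF T' ∧ S.Nonempty}) :=
  (Equiv.sumCompl (fun T : LevelT (n+1) => T.1.1 0 = 0)).symm.trans (Equiv.sumCongr E1 E2)

noncomputable instance fintypeSub {n : ℕ} (T' : LevelT n) :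
    Fintype {S : Finset ℕ // S ⊆ FreeF T' ∧ S.Nonempty} :=
  Fintype.ofEquiv {S : Finset ℕ // S ∈ (FreeF T').powerset.erase ∅}
    (Equiv.subtypeEquivRight (by
      intro S
      rw [Finset.mem_erase, Finset.mem_powerset, ← Finset.nonempty_iff_ne_empty, and_comm]))

noncomputable instance fintypeLevelT : ∀ n, Fintype (LevelT n)
  | 0 => Fintype.ofSubsingleton (⟨(fun _ => 0, fun _ _ => false), perm_zero⟩ : LevelT 0)
  | (n+1) =>
    letI := fintypeLevelT n
    Fintype.ofEquiv _ (EquivSucc (n := n)).symm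

noncomputable def Nw (n t : ℕ) : ℕ := ∑ T : LevelT n, t ^ sT T

theorem Nw_zero (t : ℕ) : Nw 0 t = 1 := by
  rw [Nw, show (Finset.univ : Finset (LevelT 0)) =
      {⟨(fun _ => 0, fun _ _ => false), perm_zero⟩} from
    Finset.eq_singleton_iff_unique_mem.2
      ⟨Finset.mem_univ _, fun x _ => levelT_zero_eq x⟩]
  refine (Finset.sum_singleton (fun T : LevelT 0 => t ^ sT T) _).trans ?_
  simp [sT, sStat]

theorem Nw_succ (n t : ℕ) : Nw (n+1) t = 2 * t * Nw n (t+1) := by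
  have key : ∀ T' : LevelT n,
      t ^ (sT T' + 1) + ∑ S ∈ (FreeF T').powerset.erase ∅, t ^ statF n (FreeF T') S =
        2 * t * (t + 1) ^ sT T' := by
    intro T'
    have hmax : ∀ i ∈ FreeF T', i ≤ n := by
      intro i hi
      have := FreeF0_subset_range n T'.1.1 T'.1.2 hi
      simp only [Finset.mem_range] at this; omega
    have hmem : n ∈ FreeF T' := mem_FreeF0_self
    have h := count_key' t n (FreeF T') hmem hmax
    rw [card_FreeF, Nat.add_sub_cancel] at h
    rw [← Finset.add_sum_erase _ _ (Finset.empty_mem_powerset (FreeF T')),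
      statF_empty hmem, card_FreeF, Nat.add_sub_cancel] at h
    generalize 2 * t * (t + 1) ^ sT T' = R at h ⊢
    omega
  rw [Nw]
  rw [← Equiv.sum_comp (EquivSucc (n := n)).symm (fun T => t ^ sT T)]
  rw [Fintype.sum_sum_type]
  have hinl : ∀ T' : LevelT n,
      t ^ sT ((EquivSucc (n := n)).symm (Sum.inl T')) = t ^ (sT T' + 1) := by
    intro T'
    have : (EquivSucc (n := n)).symm (Sum.inl T') = (E1.symm T').1 := rfl
    rw [this, sT_E1 (E1.symm T'), Equiv.apply_symm_apply]
  have hinr : ∀ y : Σ T' : LevelT n, {S : Finset ℕ // S ⊆ FreeF T' ∧ S.Nonempty},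
      t ^ sT ((EquivSucc (n := n)).symm (Sum.inr y)) =
        t ^ statF n (FreeF y.1) y.2.1 := by
    intro y
    have h1 : (EquivSucc (n := n)).symm (Sum.inr y) = (E2.symm y).1 := rfl
    rw [h1, sT_E2 (E2.symm y), Equiv.apply_symm_apply]
  simp only [hinl, hinr]
  -- sigma sum to double sum
  rw [← Finset.univ_sigma_univ, Finset.sum_sigma]
  have hfiber : ∀ T' : LevelT n,
      ∑ s : {S : Finset ℕ // S ⊆ FreeF T' ∧ S.Nonempty}, t ^ statF n (FreeF T') s.1 =
        ∑ S ∈ (FreeF T').powerset.erase ∅, t ^ statF n (FreeF T') S := by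
    intro T'
    rw [Finset.sum_subtype ((FreeF T').powerset.erase ∅) (by
      intro S
      rw [Finset.mem_erase, Finset.mem_powerset, ← Finset.nonempty_iff_ne_empty, and_comm])
      (fun S => t ^ statF n (FreeF T') S)]
  simp only [hfiber]
  rw [← Finset.sum_add_distrib]
  have : ∀ T' : LevelT n,
      t ^ (sT T' + 1) + ∑ S ∈ (FreeF T').powerset.erase ∅, t ^ statF n (FreeF T') S =
        2 * t * (t + 1) ^ sT T' := key
  rw [Finset.sum_congr rfl (fun T' _ => this T')]
  rw [Nw, Finset.mul_sum]

theorem asc_succ_left (t : ℕ) : ∀ n, Nat.ascFactorial t (n+1) = t * Nat.ascFactorial (t+1) n := by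
  intro n
  induction n with
  | zero => simp [Nat.ascFactorial]
  | succ k ih =>
    rw [Nat.ascFactorial_succ, ih, Nat.ascFactorial_succ]
    ring

theorem Nw_eq : ∀ n t, Nw n t = 2 ^ n * Nat.ascFactorial t n := by
  intro n
  induction n with
  | zero => intro t; rw [Nw_zero]; simp [Nat.ascFactorial]
  | succ k ih =>
    intro t
    rw [Nw_succ, ih (t+1), asc_succ_left]
    ring

theorem card_levelT (n : ℕ) : Nat.card (LevelT n) = 2 ^ n * Nat.factorial n := by
  have h1 : Nat.card (LevelT n) = Nw n 1 := by
    rw [Nat.card_eq_fintype_card, Nw]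
    simp
  rw [h1, Nw_eq n 1, Nat.one_ascFactorial]


/-- The number of type `B_n` permutation tableaux equals `2^n · n!`,
the order of the type `B_n` Weyl group. -/
theorem card_typeB_permutation_tableaux (n : ℕ) :
    Nat.card {x : (ℕ → ℕ) × (ℕ → ℕ → Bool) // IsPermTabB n x.1 x.2} =
      2 ^ n * Nat.factorial n := by
  exact card_levelT n
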